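/- The triple (K[PBT], ⋋, Δ) is a unital infinitesimal bialgebra: for all trees t, w, Δ(t ⋋ w) = Σ t₍₁₎ ⊗ (t₍₂₎ ⋋ w) + Σ (t ⋋ w₍₁₎) ⊗ w₍₂₎ − t ⊗ w. -/
import Mathlib


open Classical

/-- Planar binary rooted trees. `leaf` is the unique tree `|` with one leaf. -/
inductive PBT : Type
  | leaf : PBT
  | node : PBT → PBT → PBT
  deriving DecidableEq

/-- Number of leaves of a planar binary rooted tree. -/
def leavesCount : PBT → ℕ
  | .leaf => 1
  | .node l r => leavesCount l + leavesCount r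

/-- Graft the tree `w` onto the leftmost (first) leaf of `t`. -/
def graft1 : PBT → PBT → PBT
  | .leaf, w => w
  | .node l r, w => .node (graft1 l w) r

/-- The product `t ⋋ w := w ∘₁ (t ∨ |)`. -/
def lprod (t w : PBT) : PBT := graft1 w (.node t .leaf)

/-- A tree is `⋋`-irreducible if it is not a product of two (nonempty) trees. -/
def Irr (t : PBT) : Prop := ¬ ∃ u w : PBT, t = lprod u w

/-- `∨` extended to trees-with-unit, the unit (`none`) acting as a unit. -/
def ovee : Option PBT → Option PBT → Option PBT
  | none, b => b
  | a, none => a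
  | some t, some w => some (PBT.node t w)

/-- The coproduct on trees (with values in the free module on pairs of
trees-with-unit): `Δ(t ∨ w) = Σ t₍₁₎ ⊗ (t₍₂₎ ∨ w) + Σ (t ∨ w₍₁₎) ⊗ w₍₂₎ − t ⊗ w`. -/
noncomputable def D0 : PBT → ((Option PBT × Option PBT) →₀ ℤ)
  | .leaf =>
      Finsupp.single (none, some PBT.leaf) 1 + Finsupp.single (some PBT.leaf, none) 1
  | .node t w =>
      ((D0 t).sum fun p a => a • Finsupp.single (p.1, ovee p.2 (some w)) 1) +
      ((D0 w).sum fun p a => a • Finsupp.single (ovee (some t) p.1, p.2) 1) -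
      Finsupp.single (some t, some w) 1

/-- The coproduct `Δ` on the vector space spanned by trees and the unit:
`Δ(1) = 1 ⊗ 1` and on trees it is given by `D0`. -/
noncomputable def D : Option PBT → ((Option PBT × Option PBT) →₀ ℤ)
  | none => Finsupp.single (none, none) 1
  | some t => D0 t

/-- `⋋` extended to trees-with-unit, the unit (`none`) acting as a unit. -/
def olprod : Option PBT → Option PBT → Option PBT
  | none, b => b
  | a, none => a
  | some t, some w => some (lprod t w)

lemma sum_smul_single {α β : Type*} (f : α →₀ ℤ) (g : α → β) :
    (f.sum fun p a => a • Finsupp.single (g p) 1) = f.mapDomain g := by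
  rw [Finsupp.mapDomain]
  exact Finsupp.sum_congr fun p _ => by rw [Finsupp.smul_single, smul_eq_mul, mul_one]

lemma mapDomain_sub' {α β : Type*} (g : α → β) (f h : α →₀ ℤ) :
    (f - h).mapDomain g = f.mapDomain g - h.mapDomain g :=
  map_sub (Finsupp.mapDomain.addMonoidHom g) f h

lemma D0_node (t w : PBT) :
    D0 (.node t w) =
      (D0 t).mapDomain (fun p => (p.1, ovee p.2 (some w))) +
      (D0 w).mapDomain (fun p => (ovee (some t) p.1, p.2)) -
      Finsupp.single (some t, some w) 1 := by
  rw [D0, sum_smul_single, sum_smul_single]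

lemma ovee_olprod (u v : PBT) (x : Option PBT) :
    ovee (olprod x (some u)) (some v) = olprod x (some (.node u v)) := by
  cases x <;> rfl

lemma olprod_ovee (t u : PBT) (x : Option PBT) :
    olprod (some t) (ovee (some u) x) = ovee (some (lprod t u)) x := by
  cases x <;> rfl

lemma ovee_leaf_olprod (x : Option PBT) :
    ovee x (some PBT.leaf) = olprod x (some PBT.leaf) := by
  cases x <;> rfl

/-- `(K[PBT], ⋋, Δ)` is a unital infinitesimal bialgebra:
`Δ(t ⋋ w) = Σ t₍₁₎ ⊗ (t₍₂₎ ⋋ w) + Σ (t ⋋ w₍₁₎) ⊗ w₍₂₎ − t ⊗ w`. -/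
theorem stmt15 (t w : PBT) :
    D (some (lprod t w)) =
      ((D (some t)).sum fun p a => a • Finsupp.single (p.1, olprod p.2 (some w)) 1) +
      ((D (some w)).sum fun p a => a • Finsupp.single (olprod (some t) p.1, p.2) 1) -
      Finsupp.single (some t, some w) 1 := by
  induction w with
  | leaf =>
      show D0 (.node t .leaf) = _
      simp only [D]
      rw [D0_node, sum_smul_single, sum_smul_single]
      have h1 : (fun p : Option PBT × Option PBT => (p.1, ovee p.2 (some PBT.leaf)))
          = fun p : Option PBT × Option PBT => (p.1, olprod p.2 (some PBT.leaf)) := by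
        funext p; rw [ovee_leaf_olprod]
      rw [h1]
      congr 2
      rw [D0, Finsupp.mapDomain_add, Finsupp.mapDomain_add,
        Finsupp.mapDomain_single, Finsupp.mapDomain_single,
        Finsupp.mapDomain_single, Finsupp.mapDomain_single]
      rfl
  | node u v ihu ihv =>
      simp only [D] at ihu ⊢
      rw [sum_smul_single, sum_smul_single] at ihu
      rw [sum_smul_single, sum_smul_single]
      show D0 (.node (lprod t u) v) = _
      rw [D0_node, ihu, D0_node, mapDomain_sub', mapDomain_sub',
        Finsupp.mapDomain_add, Finsupp.mapDomain_add,
        ← Finsupp.mapDomain_comp, ← Finsupp.mapDomain_comp,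
        ← Finsupp.mapDomain_comp, ← Finsupp.mapDomain_comp,
        Finsupp.mapDomain_single, Finsupp.mapDomain_single]
      have e1 : ((fun p : Option PBT × Option PBT => (p.1, ovee p.2 (some v))) ∘
          fun p : Option PBT × Option PBT => (p.1, olprod p.2 (some u)))
          = fun p : Option PBT × Option PBT => (p.1, olprod p.2 (some (PBT.node u v))) := by
        funext p; exact congrArg _ (ovee_olprod u v p.2)
      have e2 : ((fun p : Option PBT × Option PBT => (p.1, ovee p.2 (some v))) ∘
          fun p : Option PBT × Option PBT => (olprod (some t) p.1, p.2))
          = ((fun p : Option PBT × Option PBT => (olprod (some t) p.1, p.2)) ∘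
          fun p : Option PBT × Option PBT => (p.1, ovee p.2 (some v))) := rfl
      have e3 : ((fun p : Option PBT × Option PBT => (olprod (some t) p.1, p.2)) ∘
          fun p : Option PBT × Option PBT => (ovee (some u) p.1, p.2))
          = fun p : Option PBT × Option PBT => (ovee (some (lprod t u)) p.1, p.2) := by
        funext p; exact congrArg (·, p.2) (olprod_ovee t u p.1)
      rw [e1, e2, e3]
      simp only [ovee, olprod]
      abel
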